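/- Let L be outer (i.e. there is some σ with (L,σ) satisfying (F1)), with associated characteristic class χ(L) = [χ_{(L,σ)}] ∈ H³(𝒢,Z(𝒩))_L. Then there exists a groupoid extension of 𝒢 by 𝒩 whose 𝒢-kernel is [L] (i.e. there exists a full factor system (L,σ'') satisfying both (F1) and (F2)) if and only if χ(L) is trivial. -/

import Mathlib

/-- A groupoid over a unit space `U`, with a total (junk-valued outside composables)
multiplication. `e : U → G` is the inclusion of units. -/
structure Gpd (G U : Type) where
  s : G → U
  r : G → U
  e : U → G
  mul : G → G → G
  inv : G → G
  s_e : ∀ u, s (e u) = u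
  r_e : ∀ u, r (e u) = u
  e_mul : ∀ x, mul (e (r x)) x = x
  mul_e : ∀ x, mul x (e (s x)) = x
  s_inv : ∀ x, s (inv x) = r x
  r_inv : ∀ x, r (inv x) = s x
  inv_mul : ∀ x, mul (inv x) x = e (s x)
  mul_inv : ∀ x, mul x (inv x) = e (r x)
  r_mul : ∀ x y, s x = r y → r (mul x y) = r x
  s_mul : ∀ x y, s x = r y → s (mul x y) = s y
  assoc : ∀ x y z, s x = r y → s y = r z → mul (mul x y) z = mul x (mul y z)

/-- A group bundle over `U`: a total space `N` with projection `p`, each fiber being a group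
(operations are total, with group laws holding fiberwise). -/
structure GrpBundle (N U : Type) where
  p : N → U
  one : U → N
  mul : N → N → N
  inv : N → N
  p_one : ∀ u, p (one u) = u
  p_mul : ∀ n m, p n = p m → p (mul n m) = p n
  p_inv : ∀ n, p (inv n) = p n
  one_mul : ∀ n, mul (one (p n)) n = n
  mul_one : ∀ n, mul n (one (p n)) = n
  inv_mul : ∀ n, mul (inv n) n = one (p n)
  mul_inv : ∀ n, mul n (inv n) = one (p n)
  assoc : ∀ a b c, p a = p b → p b = p c → mul (mul a b) c = mul a (mul b c)

/-- A pair `(L, σ)` satisfying all the conditions of a factor system for `(𝒢, 𝒩)` except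
possibly the twisted cocycle condition (F2): `L` is a family of fiberwise group isomorphisms
`L x : N_{s x} → N_{r x}`, trivial on units, and `σ : 𝒢⁽²⁾ → 𝒩` is normalized with
`σ (x, y) ∈ N_{r x}`, satisfying the twisted action condition (F1). -/
structure PreFS {G U N : Type} (𝒢 : Gpd G U) (𝒩 : GrpBundle N U) where
  L : G → N → N
  σ : G → G → N
  L_fib : ∀ x n, 𝒩.p n = 𝒢.s x → 𝒩.p (L x n) = 𝒢.r x
  L_mul : ∀ x n m, 𝒩.p n = 𝒢.s x → 𝒩.p m = 𝒢.s x →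
    L x (𝒩.mul n m) = 𝒩.mul (L x n) (L x m)
  L_bij : ∀ x, Set.BijOn (L x) {n | 𝒩.p n = 𝒢.s x} {n | 𝒩.p n = 𝒢.r x}
  L_e : ∀ u n, 𝒩.p n = u → L (𝒢.e u) n = n
  σ_fib : ∀ x y, 𝒢.s x = 𝒢.r y → 𝒩.p (σ x y) = 𝒢.r x
  σ_e_left : ∀ x, σ (𝒢.e (𝒢.r x)) x = 𝒩.one (𝒢.r x)
  σ_e_right : ∀ x, σ x (𝒢.e (𝒢.s x)) = 𝒩.one (𝒢.r x)
  F1 : ∀ x y n, 𝒢.s x = 𝒢.r y → 𝒩.p n = 𝒢.s y →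
    L x (L y n) = 𝒩.mul (𝒩.mul (σ x y) (L (𝒢.mul x y) n)) (𝒩.inv (σ x y))

/-- A factor system `(L, σ)` for `(𝒢, 𝒩)`: conditions (F1) and (F2). -/
structure FS {G U N : Type} (𝒢 : Gpd G U) (𝒩 : GrpBundle N U) extends PreFS 𝒢 𝒩 where
  F2 : ∀ x y z, 𝒢.s x = 𝒢.r y → 𝒢.s y = 𝒢.r z →
    𝒩.mul (σ x y) (σ (𝒢.mul x y) z) = 𝒩.mul (L x (σ y z)) (σ x (𝒢.mul y z))

/-- `χ_{(L,σ)}(x,y,z) = L_x(σ(y,z)) σ(x,yz) σ(xy,z)⁻¹ σ(x,y)⁻¹`. -/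
def chi {G U N : Type} (𝒢 : Gpd G U) (𝒩 : GrpBundle N U)
    (L : G → N → N) (σ : G → G → N) (x y z : G) : N :=
  𝒩.mul (𝒩.mul (𝒩.mul (L x (σ y z)) (σ x (𝒢.mul y z)))
    (𝒩.inv (σ (𝒢.mul x y) z))) (𝒩.inv (σ x y))

section Aux

variable {G U N : Type}

/-- The fiber of a group bundle over a point, as a type. -/
abbrev Fib (𝒩 : GrpBundle N U) (u : U) := {n : N // 𝒩.p n = u}

instance (𝒩 : GrpBundle N U) (u : U) : Group (Fib 𝒩 u) where
  mul a b := ⟨𝒩.mul a.1 b.1, by rw [𝒩.p_mul _ _ (a.2.trans b.2.symm), a.2]⟩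
  one := ⟨𝒩.one u, 𝒩.p_one u⟩
  inv a := ⟨𝒩.inv a.1, (𝒩.p_inv a.1).trans a.2⟩
  mul_assoc a b c := Subtype.ext (𝒩.assoc a.1 b.1 c.1 (a.2.trans b.2.symm) (b.2.trans c.2.symm))
  one_mul a := Subtype.ext (by have := 𝒩.one_mul a.1; rwa [a.2] at this)
  mul_one a := Subtype.ext (by have := 𝒩.mul_one a.1; rwa [a.2] at this)
  inv_mul_cancel a := Subtype.ext (by
    show 𝒩.mul (𝒩.inv a.1) a.1 = 𝒩.one u
    rw [𝒩.inv_mul, a.2])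

/-- The inverse of an element commuting with everything commutes with everything. -/
lemma central_inv {Γ : Type} [Group Γ] (R : Γ) (h : ∀ m, R * m = m * R) (m : Γ) :
    R⁻¹ * m = m * R⁻¹ := by
  calc R⁻¹ * m = R⁻¹ * ((m * R) * R⁻¹) := by group
  _ = R⁻¹ * ((R * m) * R⁻¹) := by rw [← h m]
  _ = m * R⁻¹ := by group

/-- Generic group-theoretic rearrangement used in the forward direction. -/
lemma rearr1 {Γ : Type} [Group Γ] (R1 R2 R3 R4 A B C D : Γ)
    (h2 : ∀ m, R2 * m = m * R2) (h3 : ∀ m, R3 * m = m * R3)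
    (hF : A * B = D * C) :
    (((R1 * A) * (R2 * B)) * (R3 * C)⁻¹) * (R4 * D)⁻¹ = ((R1 * R2) * R3⁻¹) * R4⁻¹ := by
  have e1 : (R1 * A) * (R2 * B) = (R1 * R2) * (A * B) := by
    calc (R1 * A) * (R2 * B) = R1 * ((A * R2) * B) := by group
    _ = R1 * ((R2 * A) * B) := by rw [← h2 A]
    _ = (R1 * R2) * (A * B) := by group
  rw [e1, hF]
  calc (((R1 * R2) * (D * C)) * (R3 * C)⁻¹) * (R4 * D)⁻¹
      = ((R1 * R2) * (D * R3⁻¹)) * (D⁻¹ * R4⁻¹) := by group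
  _ = ((R1 * R2) * (R3⁻¹ * D)) * (D⁻¹ * R4⁻¹) := by rw [central_inv R3 h3 D]
  _ = ((R1 * R2) * R3⁻¹) * R4⁻¹ := by group

/-- Generic group-theoretic rearrangement used in the converse direction. -/
lemma rearr2 {Γ : Type} [Group Γ] (R1 R2 R3 R4 A B C D : Γ)
    (h2 : ∀ m, R2 * m = m * R2) (h3 : ∀ m, R3 * m = m * R3)
    (h : ((A * B) * C⁻¹) * D⁻¹ = ((R1 * R2) * R3⁻¹) * R4⁻¹) :
    (R4⁻¹ * D) * (R3⁻¹ * C) = (R1⁻¹ * A) * (R2⁻¹ * B) := by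
  have key : A * B = (((R1 * R2) * R3⁻¹) * R4⁻¹) * (D * C) := by
    rw [← h]; group
  have lhs_eq : (R4⁻¹ * D) * (R3⁻¹ * C) = R4⁻¹ * (R3⁻¹ * (D * C)) := by
    calc (R4⁻¹ * D) * (R3⁻¹ * C) = R4⁻¹ * ((D * R3⁻¹) * C) := by group
    _ = R4⁻¹ * ((R3⁻¹ * D) * C) := by rw [central_inv R3 h3 D]
    _ = R4⁻¹ * (R3⁻¹ * (D * C)) := by group
  have rhs_eq : (R1⁻¹ * A) * (R2⁻¹ * B) = R4⁻¹ * (R3⁻¹ * (D * C)) := by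
    calc (R1⁻¹ * A) * (R2⁻¹ * B) = R1⁻¹ * ((A * R2⁻¹) * B) := by group
    _ = R1⁻¹ * ((R2⁻¹ * A) * B) := by rw [central_inv R2 h2 A]
    _ = R1⁻¹ * (R2⁻¹ * (A * B)) := by group
    _ = R1⁻¹ * (R2⁻¹ * ((((R1 * R2) * R3⁻¹) * R4⁻¹) * (D * C))) := by rw [key]
    _ = R1⁻¹ * ((R2⁻¹ * R1) * (R2 * (R3⁻¹ * (R4⁻¹ * (D * C))))) := by group
    _ = R1⁻¹ * ((R1 * R2⁻¹) * (R2 * (R3⁻¹ * (R4⁻¹ * (D * C))))) := by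
        rw [central_inv R2 h2 R1]
    _ = (R3⁻¹ * R4⁻¹) * (D * C) := by group
    _ = (R4⁻¹ * R3⁻¹) * (D * C) := by rw [central_inv R3 h3 R4⁻¹]
    _ = R4⁻¹ * (R3⁻¹ * (D * C)) := by group
  rw [lhs_eq, rhs_eq]

/-- Conjugation is unchanged by multiplying by a central element. -/
lemma conj_central {Γ : Type} [Group Γ] (R S M : Γ) (h : ∀ m, R * m = m * R) :
    ((R⁻¹ * S) * M) * (R⁻¹ * S)⁻¹ = (S * M) * S⁻¹ := by
  calc ((R⁻¹ * S) * M) * (R⁻¹ * S)⁻¹ = R⁻¹ * (((S * M) * S⁻¹) * R) := by group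
  _ = R⁻¹ * (R * ((S * M) * S⁻¹)) := by rw [← h ((S * M) * S⁻¹)]
  _ = (S * M) * S⁻¹ := by group

variable {𝒢 : Gpd G U} {𝒩 : GrpBundle N U}

/-- `L x` maps the unit to the unit. -/
lemma L_one' (P : PreFS 𝒢 𝒩) (x : G) : P.L x (𝒩.one (𝒢.s x)) = 𝒩.one (𝒢.r x) := by
  have hp : 𝒩.p (𝒩.one (𝒢.s x)) = 𝒢.s x := 𝒩.p_one _
  set k : Fib 𝒩 (𝒢.r x) := ⟨P.L x (𝒩.one (𝒢.s x)), P.L_fib x _ hp⟩ with hk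
  have hmul : 𝒩.mul (𝒩.one (𝒢.s x)) (𝒩.one (𝒢.s x)) = 𝒩.one (𝒢.s x) := by
    have := 𝒩.mul_one (𝒩.one (𝒢.s x)); rwa [𝒩.p_one] at this
  have h1 : k * k = k := Subtype.ext (by
    show 𝒩.mul (P.L x (𝒩.one (𝒢.s x))) (P.L x (𝒩.one (𝒢.s x))) = P.L x (𝒩.one (𝒢.s x))
    rw [← P.L_mul x _ _ hp hp, hmul])
  have h2 : k = 1 := by
    have := mul_eq_right.mp h1
    exact h1 ▸ (by rw [this, one_mul])
  exact congrArg Subtype.val h2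

/-- `L x` commutes with inversion. -/
lemma L_inv' (P : PreFS 𝒢 𝒩) (x : G) (n : N) (hn : 𝒩.p n = 𝒢.s x) :
    P.L x (𝒩.inv n) = 𝒩.inv (P.L x n) := by
  have hpi : 𝒩.p (𝒩.inv n) = 𝒢.s x := (𝒩.p_inv n).trans hn
  set K : Fib 𝒩 (𝒢.r x) := ⟨P.L x n, P.L_fib x n hn⟩ with hK
  set K' : Fib 𝒩 (𝒢.r x) := ⟨P.L x (𝒩.inv n), P.L_fib x _ hpi⟩ with hK'
  have h1 : K' * K = 1 := Subtype.ext (by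
    show 𝒩.mul (P.L x (𝒩.inv n)) (P.L x n) = 𝒩.one (𝒢.r x)
    rw [← P.L_mul x _ _ hpi hn]
    have := 𝒩.inv_mul n
    rw [this, hn, L_one'])
  have h2 : K' = K⁻¹ := eq_inv_of_mul_eq_one_left h1
  exact congrArg Subtype.val h2

/-- The image of a fiberwise-central element under `L x` is central in the target fiber. -/
lemma L_central (P : PreFS 𝒢 𝒩) (x : G) (n : N) (hn : 𝒩.p n = 𝒢.s x)
    (hc : ∀ m, 𝒩.p m = 𝒢.s x → 𝒩.mul n m = 𝒩.mul m n) :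
    ∀ m, 𝒩.p m = 𝒢.r x → 𝒩.mul (P.L x n) m = 𝒩.mul m (P.L x n) := by
  intro m hm
  obtain ⟨k, hk, rfl⟩ := (P.L_bij x).surjOn (show m ∈ {n | 𝒩.p n = 𝒢.r x} from hm)
  have hk' : 𝒩.p k = 𝒢.s x := hk
  rw [← P.L_mul x _ _ hn hk', hc k hk', P.L_mul x _ _ hk' hn]

/-- Decomposition `σ = ρ · σ''` where `ρ = σ · σ''⁻¹`. -/
lemma sigma_decomp (P : PreFS 𝒢 𝒩) (F : FS 𝒢 𝒩) (p q : G) (h : 𝒢.s p = 𝒢.r q) :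
    P.σ p q = 𝒩.mul (𝒩.mul (P.σ p q) (𝒩.inv (F.σ p q))) (F.σ p q) := by
  have hS : 𝒩.p (P.σ p q) = 𝒢.r p := P.σ_fib p q h
  have hT : 𝒩.p (F.σ p q) = 𝒢.r p := F.σ_fib p q h
  exact congrArg Subtype.val
    (show (⟨P.σ p q, hS⟩ : Fib 𝒩 (𝒢.r p)) =
      ((⟨P.σ p q, hS⟩ : Fib 𝒩 (𝒢.r p)) * (⟨F.σ p q, hT⟩ : Fib 𝒩 (𝒢.r p))⁻¹)
        * ⟨F.σ p q, hT⟩ from by group)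

/-- The deviation `ρ = σ · σ''⁻¹` between two factor-system cochains with the same `L`
is central in each fiber. -/
lemma fwd_cent (P : PreFS 𝒢 𝒩) (F : FS 𝒢 𝒩)
    (hL : ∀ x n, 𝒩.p n = 𝒢.s x → F.L x n = P.L x n)
    (x y : G) (hxy : 𝒢.s x = 𝒢.r y) :
    ∀ m, 𝒩.p m = 𝒢.r x →
      𝒩.mul (𝒩.mul (P.σ x y) (𝒩.inv (F.σ x y))) m
        = 𝒩.mul m (𝒩.mul (P.σ x y) (𝒩.inv (F.σ x y))) := by
  intro m hm
  have hpS : 𝒩.p (P.σ x y) = 𝒢.r x := P.σ_fib x y hxy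
  have hpT : 𝒩.p (F.σ x y) = 𝒢.r x := F.σ_fib x y hxy
  set S : Fib 𝒩 (𝒢.r x) := ⟨P.σ x y, hpS⟩ with hSdef
  set T : Fib 𝒩 (𝒢.r x) := ⟨F.σ x y, hpT⟩ with hTdef
  have hr : 𝒢.r (𝒢.mul x y) = 𝒢.r x := 𝒢.r_mul x y hxy
  have hs : 𝒢.s (𝒢.mul x y) = 𝒢.s y := 𝒢.s_mul x y hxy
  have key : ∀ M : Fib 𝒩 (𝒢.r x), (S * M) * S⁻¹ = (T * M) * T⁻¹ := by
    intro M
    obtain ⟨n, hn, hLn⟩ := (P.L_bij (𝒢.mul x y)).surjOn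
      (show M.1 ∈ {k | 𝒩.p k = 𝒢.r (𝒢.mul x y)} from by
        show 𝒩.p M.1 = 𝒢.r (𝒢.mul x y); rw [hr]; exact M.2)
    have hn' : 𝒩.p n = 𝒢.s y := by rw [← hs]; exact hn
    have h1 := P.F1 x y n hxy hn'
    have h2 := F.F1 x y n hxy hn'
    rw [hL y n hn'] at h2
    rw [hL x (P.L y n) (by rw [P.L_fib y n hn', hxy])] at h2
    rw [hL (𝒢.mul x y) n (by rw [hs]; exact hn')] at h2
    apply Subtype.ext
    show 𝒩.mul (𝒩.mul (P.σ x y) M.1) (𝒩.inv (P.σ x y))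
        = 𝒩.mul (𝒩.mul (F.σ x y) M.1) (𝒩.inv (F.σ x y))
    rw [← hLn, ← h1, h2]
  have key2 : ∀ M : Fib 𝒩 (𝒢.r x), (T⁻¹ * S) * M = M * (T⁻¹ * S) := by
    intro M
    calc (T⁻¹ * S) * M = T⁻¹ * (((S * M) * S⁻¹) * S) := by group
    _ = T⁻¹ * (((T * M) * T⁻¹) * S) := by rw [key M]
    _ = M * (T⁻¹ * S) := by group
  have keyST : S * T⁻¹ = T⁻¹ * S := by
    calc S * T⁻¹ = (T * (T⁻¹ * S)) * T⁻¹ := by group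
    _ = ((T⁻¹ * S) * T) * T⁻¹ := by rw [← key2 T]
    _ = T⁻¹ * S := by group
  have final : (S * T⁻¹) * ⟨m, hm⟩ = (⟨m, hm⟩ : Fib 𝒩 (𝒢.r x)) * (S * T⁻¹) := by
    rw [keyST]; exact key2 ⟨m, hm⟩
  exact congrArg Subtype.val final

/-- The characteristic cocycle of `σ` is the coboundary of `ρ = σ · σ''⁻¹` when `σ''`
satisfies (F2). -/
lemma fwd_chi (P : PreFS 𝒢 𝒩) (F : FS 𝒢 𝒩)
    (hL : ∀ x n, 𝒩.p n = 𝒢.s x → F.L x n = P.L x n)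
    (x y z : G) (hxy : 𝒢.s x = 𝒢.r y) (hyz : 𝒢.s y = 𝒢.r z) :
    chi 𝒢 𝒩 P.L P.σ x y z =
      𝒩.mul (𝒩.mul (𝒩.mul
        (P.L x (𝒩.mul (P.σ y z) (𝒩.inv (F.σ y z))))
        (𝒩.mul (P.σ x (𝒢.mul y z)) (𝒩.inv (F.σ x (𝒢.mul y z)))))
        (𝒩.inv (𝒩.mul (P.σ (𝒢.mul x y) z) (𝒩.inv (F.σ (𝒢.mul x y) z)))))
        (𝒩.inv (𝒩.mul (P.σ x y) (𝒩.inv (F.σ x y)))) := by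
  have hrxy : 𝒢.r (𝒢.mul x y) = 𝒢.r x := 𝒢.r_mul x y hxy
  have hsxy : 𝒢.s (𝒢.mul x y) = 𝒢.s y := 𝒢.s_mul x y hxy
  have hryz : 𝒢.r (𝒢.mul y z) = 𝒢.r y := 𝒢.r_mul y z hyz
  have hx_yz : 𝒢.s x = 𝒢.r (𝒢.mul y z) := by rw [hryz]; exact hxy
  have hxy_z : 𝒢.s (𝒢.mul x y) = 𝒢.r z := by rw [hsxy]; exact hyz
  have hpσyz : 𝒩.p (P.σ y z) = 𝒢.s x := (P.σ_fib y z hyz).trans hxy.symm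
  have hpσ'yz : 𝒩.p (F.σ y z) = 𝒢.s x := (F.σ_fib y z hyz).trans hxy.symm
  have hpρyz : 𝒩.p (𝒩.mul (P.σ y z) (𝒩.inv (F.σ y z))) = 𝒢.s x :=
    (𝒩.p_mul _ _ (by rw [𝒩.p_inv, hpσyz, hpσ'yz])).trans hpσyz
  have pρ : ∀ p q, 𝒢.s p = 𝒢.r q →
      𝒩.p (𝒩.mul (P.σ p q) (𝒩.inv (F.σ p q))) = 𝒢.r p := by
    intro p q h
    have h1 := P.σ_fib p q h; have h2 := F.σ_fib p q h
    rw [𝒩.p_mul _ _ (by rw [𝒩.p_inv, h1, h2]), h1]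
  set a : Fib 𝒩 (𝒢.r x) := ⟨P.L x (P.σ y z), P.L_fib x _ hpσyz⟩ with hadef
  set A : Fib 𝒩 (𝒢.r x) := ⟨P.L x (F.σ y z), P.L_fib x _ hpσ'yz⟩ with hAdef
  set R1 : Fib 𝒩 (𝒢.r x) :=
    ⟨P.L x (𝒩.mul (P.σ y z) (𝒩.inv (F.σ y z))), P.L_fib x _ hpρyz⟩ with hR1def
  set b : Fib 𝒩 (𝒢.r x) := ⟨P.σ x (𝒢.mul y z), P.σ_fib _ _ hx_yz⟩ with hbdef
  set B : Fib 𝒩 (𝒢.r x) := ⟨F.σ x (𝒢.mul y z), F.σ_fib _ _ hx_yz⟩ with hBdef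
  set R2 : Fib 𝒩 (𝒢.r x) :=
    ⟨𝒩.mul (P.σ x (𝒢.mul y z)) (𝒩.inv (F.σ x (𝒢.mul y z))), pρ x _ hx_yz⟩ with hR2def
  set c : Fib 𝒩 (𝒢.r x) :=
    ⟨P.σ (𝒢.mul x y) z, (P.σ_fib _ _ hxy_z).trans hrxy⟩ with hcdef
  set C : Fib 𝒩 (𝒢.r x) :=
    ⟨F.σ (𝒢.mul x y) z, (F.σ_fib _ _ hxy_z).trans hrxy⟩ with hCdef
  set R3 : Fib 𝒩 (𝒢.r x) :=
    ⟨𝒩.mul (P.σ (𝒢.mul x y) z) (𝒩.inv (F.σ (𝒢.mul x y) z)),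
      (pρ _ z hxy_z).trans hrxy⟩ with hR3def
  set d : Fib 𝒩 (𝒢.r x) := ⟨P.σ x y, P.σ_fib x y hxy⟩ with hddef
  set D : Fib 𝒩 (𝒢.r x) := ⟨F.σ x y, F.σ_fib x y hxy⟩ with hDdef
  set R4 : Fib 𝒩 (𝒢.r x) :=
    ⟨𝒩.mul (P.σ x y) (𝒩.inv (F.σ x y)), pρ x y hxy⟩ with hR4def
  have ha : a = R1 * A := Subtype.ext (by
    show P.L x (P.σ y z)
        = 𝒩.mul (P.L x (𝒩.mul (P.σ y z) (𝒩.inv (F.σ y z)))) (P.L x (F.σ y z))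
    conv_lhs => rw [sigma_decomp P F y z hyz]
    rw [P.L_mul x _ _ hpρyz hpσ'yz])
  have hb : b = R2 * B := Subtype.ext (sigma_decomp P F x (𝒢.mul y z) hx_yz)
  have hcc : c = R3 * C := Subtype.ext (sigma_decomp P F (𝒢.mul x y) z hxy_z)
  have hd : d = R4 * D := Subtype.ext (sigma_decomp P F x y hxy)
  have hF2 : A * B = D * C := by
    have h := F.F2 x y z hxy hyz
    rw [hL x (F.σ y z) hpσ'yz] at h
    exact (Subtype.ext h).symm
  have hR2c : ∀ M : Fib 𝒩 (𝒢.r x), R2 * M = M * R2 := fun M =>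
    Subtype.ext (fwd_cent P F hL x (𝒢.mul y z) hx_yz M.1 M.2)
  have hR3c : ∀ M : Fib 𝒩 (𝒢.r x), R3 * M = M * R3 := fun M =>
    Subtype.ext (fwd_cent P F hL (𝒢.mul x y) z hxy_z M.1 (M.2.trans hrxy.symm))
  have main : ((a * b) * c⁻¹) * d⁻¹ = ((R1 * R2) * R3⁻¹) * R4⁻¹ := by
    rw [ha, hb, hcc, hd]
    exact rearr1 R1 R2 R3 R4 A B C D hR2c hR3c hF2
  exact congrArg Subtype.val main

end Aux

/-- Let `L` be outer, witnessed by a pair `(L,σ)` satisfying the twisted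
action condition (F1).  Then there exists a groupoid extension of `𝒢` by `𝒩` with `𝒢`-kernel
`[L]` — i.e. a full factor system `(L,σ'')` satisfying (F1) and (F2) — if and only if the
characteristic class `χ(L) = [χ_{(L,σ)}] ∈ H³(𝒢,Z(𝒩))_L` is trivial, i.e. `χ_{(L,σ)}` is the
coboundary `d²_L(ρ)` of a normalized central 2-cochain `ρ`. -/
theorem stmt14 {G U N : Type} (𝒢 : Gpd G U) (𝒩 : GrpBundle N U) (P : PreFS 𝒢 𝒩) :
    (∃ F : FS 𝒢 𝒩, ∀ x n, 𝒩.p n = 𝒢.s x → F.L x n = P.L x n) ↔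
    (∃ ρ : G → G → N,
      (∀ x y, 𝒢.s x = 𝒢.r y → 𝒩.p (ρ x y) = 𝒢.r x) ∧
      (∀ x, ρ (𝒢.e (𝒢.r x)) x = 𝒩.one (𝒢.r x)) ∧
      (∀ x, ρ x (𝒢.e (𝒢.s x)) = 𝒩.one (𝒢.r x)) ∧
      (∀ x y, 𝒢.s x = 𝒢.r y → ∀ m, 𝒩.p m = 𝒢.r x →
        𝒩.mul (ρ x y) m = 𝒩.mul m (ρ x y)) ∧
      (∀ x y z, 𝒢.s x = 𝒢.r y → 𝒢.s y = 𝒢.r z →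
        chi 𝒢 𝒩 P.L P.σ x y z =
          𝒩.mul (𝒩.mul (𝒩.mul (P.L x (ρ y z)) (ρ x (𝒢.mul y z)))
            (𝒩.inv (ρ (𝒢.mul x y) z))) (𝒩.inv (ρ x y)))) := by
  constructor
  · rintro ⟨F, hL⟩
    refine ⟨fun x y => 𝒩.mul (P.σ x y) (𝒩.inv (F.σ x y)), ?_, ?_, ?_, ?_, ?_⟩
    · intro x y hxy
      have h1 := P.σ_fib x y hxy; have h2 := F.σ_fib x y hxy
      show 𝒩.p (𝒩.mul (P.σ x y) (𝒩.inv (F.σ x y))) = 𝒢.r x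
      rw [𝒩.p_mul _ _ (by rw [𝒩.p_inv, h1, h2]), h1]
    · intro x
      show 𝒩.mul (P.σ (𝒢.e (𝒢.r x)) x) (𝒩.inv (F.σ (𝒢.e (𝒢.r x)) x)) = 𝒩.one (𝒢.r x)
      rw [P.σ_e_left x, F.σ_e_left x]
      have := 𝒩.mul_inv (𝒩.one (𝒢.r x)); rwa [𝒩.p_one] at this
    · intro x
      show 𝒩.mul (P.σ x (𝒢.e (𝒢.s x))) (𝒩.inv (F.σ x (𝒢.e (𝒢.s x)))) = 𝒩.one (𝒢.r x)
      rw [P.σ_e_right x, F.σ_e_right x]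
      have := 𝒩.mul_inv (𝒩.one (𝒢.r x)); rwa [𝒩.p_one] at this
    · intro x y hxy m hm
      exact fwd_cent P F hL x y hxy m hm
    · intro x y z hxy hyz
      exact fwd_chi P F hL x y z hxy hyz
  · rintro ⟨ρ, hfib, hel, her, hcent, hchi⟩
    refine ⟨{ L := P.L, σ := fun x y => 𝒩.mul (𝒩.inv (ρ x y)) (P.σ x y),
              L_fib := P.L_fib, L_mul := P.L_mul, L_bij := P.L_bij, L_e := P.L_e,
              σ_fib := ?_, σ_e_left := ?_, σ_e_right := ?_, F1 := ?_, F2 := ?_ },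
            fun x n _ => rfl⟩
    · intro x y hxy
      show 𝒩.p (𝒩.mul (𝒩.inv (ρ x y)) (P.σ x y)) = 𝒢.r x
      have h1 := hfib x y hxy; have h2 := P.σ_fib x y hxy
      rw [𝒩.p_mul _ _ (by rw [𝒩.p_inv, h1, h2]), 𝒩.p_inv, h1]
    · intro x
      show 𝒩.mul (𝒩.inv (ρ (𝒢.e (𝒢.r x)) x)) (P.σ (𝒢.e (𝒢.r x)) x) = 𝒩.one (𝒢.r x)
      rw [hel x, P.σ_e_left x]
      have := 𝒩.inv_mul (𝒩.one (𝒢.r x)); rwa [𝒩.p_one] at this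
    · intro x
      show 𝒩.mul (𝒩.inv (ρ x (𝒢.e (𝒢.s x)))) (P.σ x (𝒢.e (𝒢.s x))) = 𝒩.one (𝒢.r x)
      rw [her x, P.σ_e_right x]
      have := 𝒩.inv_mul (𝒩.one (𝒢.r x)); rwa [𝒩.p_one] at this
    · intro x y n hxy hn
      have hr := 𝒢.r_mul x y hxy; have hs := 𝒢.s_mul x y hxy
      have hM : 𝒩.p (P.L (𝒢.mul x y) n) = 𝒢.r x := by
        rw [P.L_fib (𝒢.mul x y) n (by rw [hs]; exact hn), hr]
      have hpS := P.σ_fib x y hxy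
      have hpR := hfib x y hxy
      set S : Fib 𝒩 (𝒢.r x) := ⟨P.σ x y, hpS⟩ with hSdef
      set R : Fib 𝒩 (𝒢.r x) := ⟨ρ x y, hpR⟩ with hRdef
      set M : Fib 𝒩 (𝒢.r x) := ⟨P.L (𝒢.mul x y) n, hM⟩ with hMdef
      have hRc : ∀ K : Fib 𝒩 (𝒢.r x), R * K = K * R := fun K =>
        Subtype.ext (hcent x y hxy K.1 K.2)
      have h1 := P.F1 x y n hxy hn
      show P.L x (P.L y n)
          = 𝒩.mul (𝒩.mul (𝒩.mul (𝒩.inv (ρ x y)) (P.σ x y)) (P.L (𝒢.mul x y) n))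
              (𝒩.inv (𝒩.mul (𝒩.inv (ρ x y)) (P.σ x y)))
      rw [h1]
      exact congrArg Subtype.val ((conj_central R S M hRc).symm)
    · intro x y z hxy hyz
      have hrxy := 𝒢.r_mul x y hxy; have hsxy := 𝒢.s_mul x y hxy
      have hryz := 𝒢.r_mul y z hyz
      have hx_yz : 𝒢.s x = 𝒢.r (𝒢.mul y z) := by rw [hryz]; exact hxy
      have hxy_z : 𝒢.s (𝒢.mul x y) = 𝒢.r z := by rw [hsxy]; exact hyz
      have hpσyz : 𝒩.p (P.σ y z) = 𝒢.s x := (P.σ_fib y z hyz).trans hxy.symm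
      have hpρyz : 𝒩.p (ρ y z) = 𝒢.s x := (hfib y z hyz).trans hxy.symm
      have hpiρyz : 𝒩.p (𝒩.inv (ρ y z)) = 𝒢.s x := (𝒩.p_inv _).trans hpρyz
      set a : Fib 𝒩 (𝒢.r x) := ⟨P.L x (P.σ y z), P.L_fib x _ hpσyz⟩ with hadef
      set R1 : Fib 𝒩 (𝒢.r x) := ⟨P.L x (ρ y z), P.L_fib x _ hpρyz⟩ with hR1def
      set b : Fib 𝒩 (𝒢.r x) := ⟨P.σ x (𝒢.mul y z), P.σ_fib _ _ hx_yz⟩ with hbdef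
      set R2 : Fib 𝒩 (𝒢.r x) := ⟨ρ x (𝒢.mul y z), hfib _ _ hx_yz⟩ with hR2def
      set c : Fib 𝒩 (𝒢.r x) :=
        ⟨P.σ (𝒢.mul x y) z, (P.σ_fib _ _ hxy_z).trans hrxy⟩ with hcdef
      set R3 : Fib 𝒩 (𝒢.r x) :=
        ⟨ρ (𝒢.mul x y) z, (hfib _ _ hxy_z).trans hrxy⟩ with hR3def
      set d : Fib 𝒩 (𝒢.r x) := ⟨P.σ x y, P.σ_fib x y hxy⟩ with hddef
      set R4 : Fib 𝒩 (𝒢.r x) := ⟨ρ x y, hfib x y hxy⟩ with hR4def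
      have hR2c : ∀ M : Fib 𝒩 (𝒢.r x), R2 * M = M * R2 := fun M =>
        Subtype.ext (hcent x (𝒢.mul y z) hx_yz M.1 M.2)
      have hR3c : ∀ M : Fib 𝒩 (𝒢.r x), R3 * M = M * R3 := fun M =>
        Subtype.ext (hcent (𝒢.mul x y) z hxy_z M.1 (M.2.trans hrxy.symm))
      have hchieq : ((a * b) * c⁻¹) * d⁻¹ = ((R1 * R2) * R3⁻¹) * R4⁻¹ :=
        Subtype.ext (hchi x y z hxy hyz)
      have main := rearr2 R1 R2 R3 R4 a b c d hR2c hR3c hchieq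
      show 𝒩.mul (𝒩.mul (𝒩.inv (ρ x y)) (P.σ x y))
            (𝒩.mul (𝒩.inv (ρ (𝒢.mul x y) z)) (P.σ (𝒢.mul x y) z))
          = 𝒩.mul (P.L x (𝒩.mul (𝒩.inv (ρ y z)) (P.σ y z)))
            (𝒩.mul (𝒩.inv (ρ x (𝒢.mul y z))) (P.σ x (𝒢.mul y z)))
      rw [P.L_mul x _ _ hpiρyz hpσyz, L_inv' P x _ hpρyz]
      exact congrArg Subtype.val main
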